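/- Let Ω be a measurable space, n, d, k natural numbers, and H : Ω → Matrix (Fin n) (Fin d) ℝ a measurable function such that rank(H(ω)) = k for every ω. Then there exist measurable functions K : Ω → Matrix (Fin n) (Fin k) ℝ and V : Ω → Matrix (Fin k) (Fin d) ℝ such that for every ω: H(ω) = K(ω) * V(ω), V(ω) * (V(ω))ᵀ = 1 (the rows of V(ω) are orthonormal), and rank(K(ω)) = k. -/

import Mathlib

open Matrix

/-- `Matrix m n ℝ` is definitionally `m → n → ℝ`; equip it with the product
measurable structure. -/
instance matrixMeasurableSpace {m n α : Type*} [MeasurableSpace α] :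
    MeasurableSpace (Matrix m n α) :=
  inferInstanceAs (MeasurableSpace (m → n → α))

namespace MeasFact

open MeasureTheory Submodule Module Set InnerProductSpace

instance (k : ℕ) : WellFoundedLT (Fin k) := inferInstance

noncomputable section

variable {Ω : Type*} [MeasurableSpace Ω]

lemma measurable_entry {m n : ℕ} {f : Ω → Matrix (Fin m) (Fin n) ℝ} (hf : Measurable f)
    (i : Fin m) (j : Fin n) : Measurable fun ω => f ω i j :=
  (measurable_pi_apply j).comp ((measurable_pi_apply i).comp hf)

lemma measurable_matrix {m n : ℕ} {f : Ω → Matrix (Fin m) (Fin n) ℝ}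
    (hf : ∀ i j, Measurable fun ω => f ω i j) : Measurable f :=
  measurable_pi_lambda _ fun i => measurable_pi_lambda _ fun j => hf i j

lemma measurable_det {m : ℕ} {f : Ω → Matrix (Fin m) (Fin m) ℝ} (hf : Measurable f) :
    Measurable fun ω => (f ω).det := by
  simp only [Matrix.det_apply']
  exact Finset.measurable_sum _ fun σ _ =>
    (Finset.measurable_prod _ fun i _ => measurable_entry hf _ _).const_mul _

lemma measurable_mul {a b c : ℕ} {f : Ω → Matrix (Fin a) (Fin b) ℝ}
    {g : Ω → Matrix (Fin b) (Fin c) ℝ} (hf : Measurable f) (hg : Measurable g) :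
    Measurable fun ω => f ω * g ω := by
  refine measurable_matrix fun i j => ?_
  simp only [Matrix.mul_apply]
  exact Finset.measurable_sum _ fun l _ => (measurable_entry hf i l).mul (measurable_entry hg l j)

lemma measurable_transpose {a b : ℕ} {f : Ω → Matrix (Fin a) (Fin b) ℝ} (hf : Measurable f) :
    Measurable fun ω => (f ω)ᵀ :=
  measurable_matrix fun i j => measurable_entry hf j i

lemma measurable_gramSchmidt {k d : ℕ} {f : Ω → Fin k → EuclideanSpace ℝ (Fin d)}
    (hf : ∀ i, Measurable fun ω => f ω i) (i : Fin k) :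
    Measurable fun ω => gramSchmidt ℝ (f ω) i := by
  suffices H : ∀ m : ℕ, ∀ i : Fin k, (i : ℕ) < m → Measurable fun ω => gramSchmidt ℝ (f ω) i from
    H (i + 1 : ℕ) i (Nat.lt_succ_self _)
  intro m
  induction m with
  | zero => exact fun i hi => absurd hi (Nat.not_lt_zero _)
  | succ m ih =>
    intro i hi
    have hrw : (fun ω => gramSchmidt ℝ (f ω) i) = fun ω =>
        f ω i - ∑ j ∈ Finset.Iio i,
          ((inner ℝ (gramSchmidt ℝ (f ω) j) (f ω i) : ℝ) /
            ((‖gramSchmidt ℝ (f ω) j‖ : ℝ)) ^ 2) • gramSchmidt ℝ (f ω) j := by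
      funext ω
      rw [gramSchmidt_def]
      congr 1
      refine Finset.sum_congr rfl fun j hj => ?_
      rw [starProjection_singleton]
      norm_num
    rw [hrw]
    have hgs : ∀ j ∈ Finset.Iio i, Measurable fun ω => gramSchmidt ℝ (f ω) j := by
      intro j hj
      have : j < i := Finset.mem_Iio.mp hj
      exact ih j (lt_of_lt_of_le this (Nat.lt_succ_iff.mp hi))
    exact (hf i).sub <| Finset.measurable_sum _ fun j hj =>
      ((((hgs j hj).inner (hf i)).div (((hgs j hj).norm).pow measurable_const)).smul (hgs j hj))

lemma measurable_gramSchmidtNormed {k d : ℕ} {f : Ω → Fin k → EuclideanSpace ℝ (Fin d)}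
    (hf : ∀ i, Measurable fun ω => f ω i) (i : Fin k) :
    Measurable fun ω => gramSchmidtNormed ℝ (f ω) i := by
  simp only [gramSchmidtNormed]
  exact ((measurable_gramSchmidt hf i).norm.inv).smul (measurable_gramSchmidt hf i)

/-- The rows of `B`, viewed as vectors of `EuclideanSpace ℝ (Fin d)`. -/
def rowsE {k d : ℕ} (B : Matrix (Fin k) (Fin d) ℝ) : Fin k → EuclideanSpace ℝ (Fin d) :=
  fun i => (WithLp.equiv 2 (Fin d → ℝ)).symm (B i)

/-- Gram–Schmidt orthonormalization of the rows of `B`. -/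
def gs {k d : ℕ} (B : Matrix (Fin k) (Fin d) ℝ) : Matrix (Fin k) (Fin d) ℝ :=
  Matrix.of fun i => WithLp.equiv 2 (Fin d → ℝ) (gramSchmidtNormed ℝ (rowsE B) i)

lemma gs_apply {k d : ℕ} (B : Matrix (Fin k) (Fin d) ℝ) (i : Fin k) (j : Fin d) :
    gs B i j = gramSchmidtNormed ℝ (rowsE B) i j := rfl

lemma measurable_gs {k d : ℕ} {B : Ω → Matrix (Fin k) (Fin d) ℝ} (hB : Measurable B) :
    Measurable fun ω => gs (B ω) := by
  have h1 : ∀ i, Measurable fun ω => rowsE (B ω) i := fun i =>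
    (MeasurableEquiv.toLp 2 (Fin d → ℝ)).measurable.comp ((measurable_pi_apply i).comp hB)
  refine measurable_matrix fun i j => ?_
  exact (measurable_pi_apply j).comp
    ((MeasurableEquiv.toLp 2 (Fin d → ℝ)).symm.measurable.comp
      (measurable_gramSchmidtNormed h1 i))

lemma gs_mul_transpose {k d : ℕ} (B : Matrix (Fin k) (Fin d) ℝ)
    (hB : LinearIndependent ℝ (rowsE B)) : gs B * (gs B)ᵀ = 1 := by
  have ho : Orthonormal ℝ (gramSchmidtNormed ℝ (rowsE B)) :=
    gramSchmidtNormed_orthonormal (𝕜 := ℝ) hB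
  ext i j
  have h := orthonormal_iff_ite.mp ho i j
  rw [PiLp.inner_apply] at h
  simp only [RCLike.inner_apply, conj_trivial] at h
  simpa [Matrix.mul_apply, Matrix.one_apply, gs_apply, mul_comm] using h

lemma orthonormal_expand {k d : ℕ} {v : Fin k → EuclideanSpace ℝ (Fin d)} (hv : Orthonormal ℝ v)
    {x : EuclideanSpace ℝ (Fin d)} (hx : x ∈ span ℝ (Set.range v)) :
    ∑ j, (inner ℝ (v j) x : ℝ) • v j = x := by
  obtain ⟨c, rfl⟩ := (Submodule.mem_span_range_iff_exists_fun ℝ).mp hx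
  have h1 : ∀ j, (inner ℝ (v j) (∑ i, c i • v i) : ℝ) = c j := by
    intro j
    rw [inner_sum]
    simp only [real_inner_smul_right]
    rw [Finset.sum_eq_single j]
    · rw [orthonormal_iff_ite.mp hv j j]; simp
    · intro b _ hbj
      rw [orthonormal_iff_ite.mp hv j b, if_neg (Ne.symm hbj), mul_zero]
    · simp
  simp only [h1]

lemma factor {n d k : ℕ} (H : Matrix (Fin n) (Fin d) ℝ) (σ : Fin k ↪ Fin n)
    (hrank : H.rank = k) (hB : LinearIndependent ℝ fun i : Fin k => H (σ i)) :
    H = H * (gs (H.submatrix σ id))ᵀ * gs (H.submatrix σ id) := by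
  classical
  set B := H.submatrix σ id with hBdef
  let e : EuclideanSpace ℝ (Fin d) ≃ₗ[ℝ] (Fin d → ℝ) := WithLp.linearEquiv 2 ℝ (Fin d → ℝ)
  have hliE : LinearIndependent ℝ (rowsE B) :=
    hB.map' e.symm.toLinearMap e.symm.ker
  have hspan1 : span ℝ (Set.range fun i : Fin k => H (σ i)) = span ℝ (Set.range H) := by
    have h1 : finrank ℝ (span ℝ (Set.range H)) = k := by
      rw [show Set.range H = Set.range H.row from rfl, ← Matrix.rank_eq_finrank_span_row, hrank]
    have h2 : finrank ℝ (span ℝ (Set.range fun i : Fin k => H (σ i))) = k := by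
      rw [finrank_span_eq_card hB, Fintype.card_fin]
    exact Submodule.eq_of_le_of_finrank_le
      (span_mono (by rintro _ ⟨i, rfl⟩; exact ⟨σ i, rfl⟩)) (by rw [h1, h2])
  set v := gramSchmidtNormed ℝ (rowsE B) with hv
  have hvspan : span ℝ (Set.range v) = span ℝ (Set.range (rowsE B)) := by
    rw [hv, span_gramSchmidtNormed_range, span_gramSchmidt]
  have hmem : ∀ i : Fin n, e.symm (H i) ∈ span ℝ (Set.range v) := by
    intro i
    rw [hvspan]
    have h3 : H i ∈ span ℝ (Set.range fun i : Fin k => H (σ i)) := by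
      rw [hspan1]; exact subset_span ⟨i, rfl⟩
    have h4 : span ℝ (Set.range (rowsE B)) =
        (span ℝ (Set.range fun i : Fin k => H (σ i))).map e.symm.toLinearMap := by
      rw [Submodule.map_span]
      congr 1
      rw [← Set.range_comp]
      rfl
    rw [h4]
    exact Submodule.mem_map_of_mem h3
  have ho : Orthonormal ℝ v := gramSchmidtNormed_orthonormal (𝕜 := ℝ) hliE
  ext i c
  have hexp := orthonormal_expand ho (hmem i)
  have h6 : (∑ j, (inner ℝ (v j) (e.symm (H i)) : ℝ) • e (v j)) = H i := by
    calc ∑ j, (inner ℝ (v j) (e.symm (H i)) : ℝ) • e (v j)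
        = e (∑ j, (inner ℝ (v j) (e.symm (H i)) : ℝ) • v j) := by
          rw [map_sum]; exact Finset.sum_congr rfl fun j _ => (e.map_smul _ _).symm
      _ = e (e.symm (H i)) := by rw [hexp]
      _ = H i := e.apply_symm_apply _
  have h7 := congrFun h6 c
  rw [Finset.sum_apply] at h7
  simp only [Pi.smul_apply, smul_eq_mul] at h7
  have h8 : ∀ j, (inner ℝ (v j) (e.symm (H i)) : ℝ) = ∑ c', H i c' * v j c' := by
    intro j
    rw [PiLp.inner_apply]
    simp only [RCLike.inner_apply, conj_trivial]
    exact Finset.sum_congr rfl fun c' _ => rfl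
  rw [← h7]
  simp only [Matrix.mul_apply, Matrix.transpose_apply]
  refine Finset.sum_congr rfl fun j _ => ?_
  rw [h8 j]
  rfl

lemma linIndep_iff_det {k d : ℕ} (B : Matrix (Fin k) (Fin d) ℝ) :
    LinearIndependent ℝ (fun i : Fin k => B i) ↔ (B * Bᵀ).det ≠ 0 := by
  constructor
  · intro h hdet
    have hinj : Function.Injective fun x : Fin k → ℝ => x ᵥ* (B * Bᵀ) := by
      have hker : ∀ x : Fin k → ℝ, x ᵥ* (B * Bᵀ) = 0 → x = 0 := by
        intro x hx
        have hx' : B *ᵥ (x ᵥ* B) = 0 := by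
          rw [← Matrix.vecMul_transpose, Matrix.vecMul_vecMul, hx]
        have h0 : (x ᵥ* B) ⬝ᵥ (x ᵥ* B) = 0 := by
          rw [← Matrix.dotProduct_mulVec, hx', dotProduct_zero]
        have hxB : x ᵥ* B = 0 := by
          rwa [dotProduct_self_eq_zero] at h0
        have hsum : ∑ i, x i • B i = 0 := by
          funext j
          have hj := congrFun hxB j
          simp only [Matrix.vecMul, dotProduct] at hj
          simpa [Finset.sum_apply] using hj
        exact funext fun i => Fintype.linearIndependent_iff.mp h x hsum i
      intro x y hxy
      have hxy' : x ᵥ* (B * Bᵀ) = y ᵥ* (B * Bᵀ) := hxy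
      have := hker (x - y) (by rw [Matrix.sub_vecMul, hxy', sub_self])
      exact sub_eq_zero.mp this
    have : IsUnit (B * Bᵀ) := Matrix.vecMul_injective_iff_isUnit.mp hinj
    rw [Matrix.isUnit_iff_isUnit_det, isUnit_iff_ne_zero] at this
    exact this hdet
  · intro hdet
    have hu : IsUnit (B * Bᵀ) := by
      rw [Matrix.isUnit_iff_isUnit_det, isUnit_iff_ne_zero]; exact hdet
    have hr : B.rank = k := by
      have := Matrix.rank_of_isUnit _ hu
      rw [Fintype.card_fin] at this
      rw [← Matrix.rank_self_mul_transpose, this]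
    rw [linearIndependent_iff_card_eq_finrank_span, Fintype.card_fin, Set.finrank]
    rw [show (Set.range fun i => B i) = Set.range B.row from rfl, ← Matrix.rank_eq_finrank_span_row, hr]

lemma exists_subrows {n d k : ℕ} (H : Matrix (Fin n) (Fin d) ℝ) (h : H.rank = k) :
    ∃ σ : Fin k ↪ Fin n, LinearIndependent ℝ (fun i : Fin k => H (σ i)) := by
  classical
  obtain ⟨s, hsub, hspan, hli⟩ := exists_linearIndependent ℝ (Set.range H)
  have hsfin : s.Finite := (Set.finite_range H).subset hsub
  haveI : Fintype s := hsfin.fintype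
  have hcard : Fintype.card s = k := by
    have h1 : finrank ℝ (span ℝ s) = k := by
      rw [hspan, show Set.range H = Set.range H.row from rfl, ← Matrix.rank_eq_finrank_span_row, h]
    rw [← Set.toFinset_card]
    rw [finrank_span_set_eq_card hli] at h1
    exact h1
  let e : Fin k ≃ s := (Fintype.equivFinOfCardEq hcard).symm
  have hchoose : ∀ y : s, ∃ i : Fin n, H i = (y : Fin d → ℝ) := fun y => hsub y.2
  let σ0 : s → Fin n := fun y => (hchoose y).choose
  have hσ0 : ∀ y : s, H (σ0 y) = (y : Fin d → ℝ) := fun y => (hchoose y).choose_spec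
  have hinj : Function.Injective (fun i : Fin k => σ0 (e i)) := by
    intro a b hab
    have hab' : σ0 (e a) = σ0 (e b) := hab
    have : H (σ0 (e a)) = H (σ0 (e b)) := by rw [hab']
    rw [hσ0, hσ0] at this
    exact e.injective (Subtype.ext this)
  refine ⟨⟨fun i => σ0 (e i), hinj⟩, ?_⟩
  have heq : (fun i : Fin k => H (σ0 (e i))) = fun i : Fin k => ((e i : s) : Fin d → ℝ) := by
    funext i; exact hσ0 (e i)
  show LinearIndependent ℝ fun i : Fin k => H (σ0 (e i))
  rw [heq]
  exact hli.comp e e.injective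

/-- piecewise gluing along a list of (set, function) pairs -/
def glue {Ω β : Type*} : List (Set Ω × (Ω → β)) → (Ω → β) → Ω → β
  | [], dflt => dflt
  | p :: l, dflt => fun ω => @ite _ (ω ∈ p.1) (Classical.propDecidable _) (p.2 ω) (glue l dflt ω)

lemma measurable_glue {Ω β : Type*} [MeasurableSpace Ω] [MeasurableSpace β]
    (L : List (Set Ω × (Ω → β))) (dflt : Ω → β)
    (hL : ∀ p ∈ L, MeasurableSet p.1 ∧ Measurable p.2) (hd : Measurable dflt) :
    Measurable (glue L dflt) := by
  induction L with
  | nil => exact hd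
  | cons p l ih =>
    have hp := hL p (List.mem_cons_self)
    simp only [glue]
    exact Measurable.ite hp.1 hp.2 (ih fun q hq => hL q (List.mem_cons_of_mem _ hq))

lemma glue_spec {Ω β : Type*} (L : List (Set Ω × (Ω → β))) (dflt : Ω → β) (ω : Ω)
    (h : ∃ p ∈ L, ω ∈ p.1) : ∃ p ∈ L, ω ∈ p.1 ∧ glue L dflt ω = p.2 ω := by
  induction L with
  | nil => obtain ⟨p, hp, _⟩ := h; exact absurd hp List.not_mem_nil
  | cons q l ih =>
    by_cases hq : ω ∈ q.1
    · exact ⟨q, List.mem_cons_self, hq, by simp [glue, hq]⟩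
    · obtain ⟨p, hp, hωp⟩ := h
      rcases List.mem_cons.mp hp with rfl | hpl
      · exact absurd hωp hq
      · obtain ⟨r, hr, hωr, heq⟩ := ih ⟨p, hpl, hωp⟩
        exact ⟨r, List.mem_cons_of_mem _ hr, hωr, by simp [glue, hq, heq]⟩

end

end MeasFact

/-- Measurable-selection form of the factorization: a measurable family of
rank-`k` matrices factors measurably as `H ω = K ω * V ω` with `V ω` having
orthonormal rows and `K ω` of rank `k`. -/
theorem exists_measurable_factorization_orthonormal_rows
    {Ω : Type*} [MeasurableSpace Ω] (n d k : ℕ)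
    (H : Ω → Matrix (Fin n) (Fin d) ℝ) (hHmeas : Measurable H)
    (hrank : ∀ ω, (H ω).rank = k) :
    ∃ (K : Ω → Matrix (Fin n) (Fin k) ℝ) (V : Ω → Matrix (Fin k) (Fin d) ℝ),
      Measurable K ∧ Measurable V ∧
      ∀ ω, H ω = K ω * V ω ∧ V ω * (V ω)ᵀ = 1 ∧ (K ω).rank = k := by
  classical
  let Aset : (Fin k ↪ Fin n) → Set Ω := fun σ =>
    {ω | ((H ω).submatrix σ id * ((H ω).submatrix σ id)ᵀ).det ≠ 0}
  let Vf : (Fin k ↪ Fin n) → Ω → Matrix (Fin k) (Fin d) ℝ := fun σ ω =>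
    MeasFact.gs ((H ω).submatrix σ id)
  let L : List (Set Ω × (Ω → Matrix (Fin k) (Fin d) ℝ)) :=
    (Finset.univ : Finset (Fin k ↪ Fin n)).toList.map fun σ => (Aset σ, Vf σ)
  let V : Ω → Matrix (Fin k) (Fin d) ℝ := MeasFact.glue L (fun _ => 0)
  have hsubmeas : ∀ σ : Fin k ↪ Fin n, Measurable fun ω => (H ω).submatrix σ id := fun σ =>
    MeasFact.measurable_matrix fun i j => MeasFact.measurable_entry hHmeas (σ i) j
  have hVmeas : Measurable V := by
    apply MeasFact.measurable_glue
    · intro p hp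
      obtain ⟨σ, _, rfl⟩ := List.mem_map.mp hp
      refine ⟨?_, MeasFact.measurable_gs (hsubmeas σ)⟩
      have hmdet : Measurable fun ω => ((H ω).submatrix σ id * ((H ω).submatrix σ id)ᵀ).det :=
        MeasFact.measurable_det
          (MeasFact.measurable_mul (hsubmeas σ) (MeasFact.measurable_transpose (hsubmeas σ)))
      exact hmdet (measurableSet_singleton (0 : ℝ)).compl
    · exact measurable_const
  let K : Ω → Matrix (Fin n) (Fin k) ℝ := fun ω => H ω * (V ω)ᵀ
  have hKmeas : Measurable K :=
    MeasFact.measurable_mul hHmeas (MeasFact.measurable_transpose hVmeas)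
  refine ⟨K, V, hKmeas, hVmeas, fun ω => ?_⟩
  obtain ⟨σ0, hσ0⟩ := MeasFact.exists_subrows (H ω) (hrank ω)
  have hcov : ∃ p ∈ L, ω ∈ p.1 := by
    refine ⟨(Aset σ0, Vf σ0), List.mem_map.mpr ⟨σ0, by simp [Finset.mem_toList], rfl⟩, ?_⟩
    exact (MeasFact.linIndep_iff_det ((H ω).submatrix σ0 id)).mp hσ0
  obtain ⟨p, hpL, hωp, hVeq⟩ := MeasFact.glue_spec L (fun _ => 0) ω hcov
  obtain ⟨σ, -, rfl⟩ := List.mem_map.mp hpL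
  have hdet : ((H ω).submatrix σ id * ((H ω).submatrix σ id)ᵀ).det ≠ 0 := hωp
  have hli : LinearIndependent ℝ fun i : Fin k => H ω (σ i) :=
    (MeasFact.linIndep_iff_det ((H ω).submatrix σ id)).mpr hdet
  have hVω : V ω = MeasFact.gs ((H ω).submatrix σ id) := hVeq
  have hfac := MeasFact.factor (H ω) σ (hrank ω) hli
  have hHKV : H ω = K ω * V ω := by
    show H ω = H ω * (V ω)ᵀ * V ω
    rw [hVω]
    exact hfac
  refine ⟨hHKV, ?_, ?_⟩
  · rw [hVω]
    exact MeasFact.gs_mul_transpose _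
      (hli.map' (WithLp.linearEquiv 2 ℝ (Fin d → ℝ)).symm.toLinearMap
        (WithLp.linearEquiv 2 ℝ (Fin d → ℝ)).symm.ker)
  · have hle : (K ω).rank ≤ k := by
      simpa using (K ω).rank_le_card_width
    have hge : k ≤ (K ω).rank := by
      calc k = (H ω).rank := (hrank ω).symm
        _ = (K ω * V ω).rank := by rw [← hHKV]
        _ ≤ (K ω).rank := Matrix.rank_mul_le_left _ _
    exact le_antisymm hle hge
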